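/- Consider the octahedron spin system of N = 6 spins with coupling constant J > 0: label the spins 1,…,6 so that the antipodal (non-adjacent) pairs are {1,6}, {2,5}, {3,4}, and every other pair of distinct spins is adjacent; the energy is H₀(s) = J ∑ ⟨s_μ, s_ν⟩, summed over all ordered pairs (μ,ν) of distinct adjacent spins. Then for every S with 0 ≤ S ≤ 6, the minimal energy among states with total spin length S equals J(S² − 12): every state s with ‖∑_μ s_μ‖ = S satisfies H₀(s) ≥ J(S² − 12), and there is such a state attaining this value. -/

import Mathlib

open scoped RealInnerProductSpace

/-- Two vertices of the octahedron (labelled by `Fin 6`) are adjacent iff they are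
distinct and not antipodal, the antipodal pairs being `{0,5}, {1,4}, {2,3}`
(i.e. `{1,6}, {2,5}, {3,4}` in 1-based labelling). -/
def octaAdj (μ ν : Fin 6) : Prop := μ ≠ ν ∧ (μ : ℕ) + (ν : ℕ) ≠ 5

instance : DecidableRel octaAdj := fun _ _ => instDecidableAnd

/-- The energy of the octahedron spin system with coupling `J`:
`J` times the sum of `⟨s_μ, s_ν⟩` over all ordered adjacent pairs. -/
noncomputable def octaEnergy (J : ℝ) (s : Fin 6 → EuclideanSpace ℝ (Fin 3)) : ℝ :=
  J * ∑ μ, ∑ ν, if octaAdj μ ν then ⟪s μ, s ν⟫ else 0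

/-- A planar vector in `ℝ³`. -/
noncomputable def octaVec (x y : ℝ) : EuclideanSpace ℝ (Fin 3) := WithLp.toLp 2 ![x, y, 0]

lemma octaVec_inner (x y x' y' : ℝ) : ⟪octaVec x y, octaVec x' y'⟫ = x*x' + y*y' := by
  simp [octaVec, PiLp.inner_apply, Fin.sum_univ_three]; ring

lemma octaVec_norm (x y : ℝ) : ‖octaVec x y‖ = Real.sqrt (x^2 + y^2) := by
  simp [octaVec, EuclideanSpace.norm_eq, Fin.sum_univ_three, Real.norm_eq_abs, sq_abs]

lemma octaVec_add (x y x' y' : ℝ) :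
    octaVec x y + octaVec x' y' = octaVec (x + x') (y + y') := by
  ext i; fin_cases i <;> simp [octaVec]

lemma octa_key (s : Fin 6 → EuclideanSpace ℝ (Fin 3)) (h : ∀ μ, ‖s μ‖ = 1) :
    ∑ μ, ∑ ν, (if octaAdj μ ν then ⟪s μ, s ν⟫ else 0) =
      ‖∑ μ, s μ‖^2 - 6 - 2*(⟪s 0, s 5⟫ + ⟪s 1, s 4⟫ + ⟪s 2, s 3⟫) := by
  have hn : ‖∑ μ, s μ‖^2 = ∑ μ, ∑ ν, ⟪s μ, s ν⟫ := by
    rw [← real_inner_self_eq_norm_sq, sum_inner]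
    exact Finset.sum_congr rfl fun μ _ => inner_sum _ _ _
  have hs : ∀ μ, ⟪s μ, s μ⟫ = 1 := fun μ => by
    rw [real_inner_self_eq_norm_sq, h μ]; norm_num
  rw [hn]
  simp only [Fin.sum_univ_six]
  simp (config := { decide := true }) only [octaAdj, hs]
  simp only [if_true, if_false]
  rw [real_inner_comm (s 5) (s 0), real_inner_comm (s 4) (s 1), real_inner_comm (s 3) (s 2)]
  ring

theorem octahedron_relative_ground_state_energy (J : ℝ) (hJ : 0 < J)
    (S : ℝ) (hS0 : 0 ≤ S) (hS6 : S ≤ 6) :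
    (∀ s : Fin 6 → EuclideanSpace ℝ (Fin 3), (∀ μ, ‖s μ‖ = 1) →
      ‖∑ μ, s μ‖ = S → J * (S ^ 2 - 12) ≤ octaEnergy J s) ∧
    ∃ s : Fin 6 → EuclideanSpace ℝ (Fin 3), (∀ μ, ‖s μ‖ = 1) ∧
      ‖∑ μ, s μ‖ = S ∧ octaEnergy J s = J * (S ^ 2 - 12) := by
  constructor
  · intro s hu hn
    have hk := octa_key s hu
    have hle : ∀ μ ν : Fin 6, ⟪s μ, s ν⟫ ≤ 1 := fun μ ν => by
      calc ⟪s μ, s ν⟫ ≤ ‖s μ‖ * ‖s ν‖ := real_inner_le_norm _ _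
        _ = 1 := by rw [hu, hu]; ring
    have h05 := hle 0 5; have h14 := hle 1 4; have h23 := hle 2 3
    rw [octaEnergy, hk, hn]
    nlinarith [hJ.le]
  · set t : ℝ := (S - 2) / 4 with ht
    have ht2 : t^2 ≤ 1 := by rw [ht]; nlinarith
    set u : ℝ := Real.sqrt (1 - t^2) with hu
    have hu2 : u^2 = 1 - t^2 := Real.sq_sqrt (by linarith)
    set a := octaVec t u with ha
    set b := octaVec t (-u) with hb
    set c := octaVec 1 0 with hc
    set s : Fin 6 → EuclideanSpace ℝ (Fin 3) := ![a, b, c, c, b, a] with hsdef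
    have hunit : ∀ μ, ‖s μ‖ = 1 := by
      intro μ
      have h1 : ‖a‖ = 1 := by rw [ha, octaVec_norm, hu2]; norm_num
      have h2 : ‖b‖ = 1 := by
        rw [hb, octaVec_norm, neg_pow]; simp only [hu2]; norm_num
      have h3 : ‖c‖ = 1 := by rw [hc, octaVec_norm]; norm_num
      fin_cases μ
      · exact h1
      · exact h2
      · exact h3
      · exact h3
      · exact h2
      · exact h1
    have hsum : ∑ μ, s μ = octaVec S 0 := by
      rw [Fin.sum_univ_six]
      show a + b + c + c + b + a = octaVec S 0
      rw [ha, hb, hc]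
      simp only [octaVec_add]
      rw [show t + t + 1 + 1 + t + t = S from by rw [ht]; ring,
        show u + -u + 0 + 0 + -u + u = (0:ℝ) from by ring]
    have hnormS : ‖∑ μ, s μ‖ = S := by
      rw [hsum, octaVec_norm, show S^2 + 0^2 = S^2 by ring]
      exact Real.sqrt_sq hS0
    refine ⟨s, hunit, hnormS, ?_⟩
    have i05 : ⟪s 0, s 5⟫ = 1 := by
      show ⟪a, a⟫ = 1
      rw [ha, octaVec_inner]; nlinarith [hu2]
    have i14 : ⟪s 1, s 4⟫ = 1 := by
      show ⟪b, b⟫ = 1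
      rw [hb, octaVec_inner]; nlinarith [hu2]
    have i23 : ⟪s 2, s 3⟫ = 1 := by
      show ⟪c, c⟫ = 1
      rw [hc, octaVec_inner]; norm_num
    rw [octaEnergy, octa_key s hunit, hnormS, i05, i14, i23]
    ring
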